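/- Let A be symmetric, irreducible, row-stochastic and nonnegative, and suppose γ ∈ (0,2) and 2γλ_n − λ_n + 1 > 0 so that Â = [[γA, (1−γ)A],[I,0]] is semi-convergent. Then for initial condition x̂(0) = [x₀; x₀], the iterates x̂(k) = Â^k x̂(0) converge to (w₁ᵀ x₀)·𝟙_{2n}, where w₁ is the left eigenvector of A for eigenvalue 1 normalized so that w₁ᵀ𝟙 = 1. -/

import Mathlib

open Filter
open Matrix

lemma aux_contract (t : ℂ) (ht : ‖t‖ < 1) (u e : ℕ → ℂ)
    (hrec : ∀ k, u (k + 1) = t * u k + e k)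
    (he : Tendsto e atTop (nhds 0)) : Tendsto u atTop (nhds 0) := by
  rw [Metric.tendsto_atTop]
  intro ε hε
  have hr0 : 0 ≤ ‖t‖ := norm_nonneg t
  have hδ : 0 < (1 - ‖t‖) * ε / 2 := by
    have : 0 < 1 - ‖t‖ := by linarith
    positivity
  obtain ⟨N, hN⟩ := (Metric.tendsto_atTop.mp he) _ hδ
  have hNe : ∀ k ≥ N, ‖e k‖ ≤ (1 - ‖t‖) * ε / 2 := by
    intro k hk
    have := hN k hk
    rw [dist_eq_norm, sub_zero] at this
    linarith
  have key : ∀ m, ‖u (N + m)‖ ≤ ‖t‖ ^ m * ‖u N‖ + ε / 2 := by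
    intro m
    induction m with
    | zero => simp; linarith
    | succ m ih =>
      have h1 : ‖u (N + (m + 1))‖ ≤ ‖t‖ * ‖u (N + m)‖ + ‖e (N + m)‖ := by
        rw [show N + (m + 1) = (N + m) + 1 by ring, hrec]
        calc ‖t * u (N + m) + e (N + m)‖ ≤ ‖t * u (N + m)‖ + ‖e (N + m)‖ := norm_add_le _ _
          _ = ‖t‖ * ‖u (N + m)‖ + ‖e (N + m)‖ := by rw [norm_mul]
      have h2 : ‖e (N + m)‖ ≤ (1 - ‖t‖) * ε / 2 := hNe _ (Nat.le_add_right _ _)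
      have h3 : ‖t‖ * ‖u (N + m)‖ ≤ ‖t‖ * (‖t‖ ^ m * ‖u N‖ + ε / 2) :=
        mul_le_mul_of_nonneg_left ih hr0
      calc ‖u (N + (m + 1))‖ ≤ ‖t‖ * (‖t‖ ^ m * ‖u N‖ + ε / 2) + (1 - ‖t‖) * ε / 2 := by linarith
        _ = ‖t‖ ^ (m + 1) * ‖u N‖ + (‖t‖ * ε / 2 + (1 - ‖t‖) * ε / 2) := by ring
        _ = ‖t‖ ^ (m + 1) * ‖u N‖ + ε / 2 := by ring
  have hgeo : Tendsto (fun m => ‖t‖ ^ m * ‖u N‖) atTop (nhds 0) := by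
    simpa using (tendsto_pow_atTop_nhds_zero_of_abs_lt_one
      (abs_lt.mpr ⟨by linarith, ht⟩)).mul_const ‖u N‖
  obtain ⟨M, hM⟩ := (Metric.tendsto_atTop.mp hgeo) _ (half_pos hε)
  refine ⟨N + M, fun k hk => ?_⟩
  rw [dist_eq_norm, sub_zero]
  have hkN : k = N + (k - N) := by omega
  have hm : M ≤ k - N := by omega
  have := key (k - N)
  have h4 := hM (k - N) hm
  rw [dist_eq_norm, sub_zero, Real.norm_eq_abs] at h4
  have h5 : ‖t‖ ^ (k - N) * ‖u N‖ ≤ |‖t‖ ^ (k - N) * ‖u N‖| := le_abs_self _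
  rw [← hkN] at this
  calc ‖u k‖ ≤ ‖t‖ ^ (k - N) * ‖u N‖ + ε / 2 := this
    _ < ε / 2 + ε / 2 := by linarith
    _ = ε := by ring

lemma aux_rec2 (t₁ t₂ : ℂ) (b c : ℝ) (hsum : t₁ + t₂ = (b : ℂ)) (hprod : t₁ * t₂ = (-c : ℂ))
    (h1 : ‖t₁‖ < 1) (h2 : ‖t₂‖ < 1) (a : ℕ → ℝ)
    (hrec : ∀ k, a (k + 2) = b * a (k + 1) + c * a k) :
    Tendsto a atTop (nhds 0) := by
  set d : ℕ → ℂ := fun k => (a (k + 1) : ℂ) - t₁ * (a k : ℂ) with hd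
  have hdrec : ∀ k, d (k + 1) = t₂ * d k := by
    intro k
    simp only [hd, hrec k]
    push_cast at hprod ⊢
    linear_combination (-(a (k+1) : ℂ)) * hsum + ((a k : ℂ)) * hprod
  have hdpow : ∀ k, d k = t₂ ^ k * d 0 := by
    intro k
    induction k with
    | zero => simp
    | succ k ih => rw [hdrec k, ih, pow_succ]; ring
  have hdt : Tendsto d atTop (nhds 0) := by
    have := (tendsto_pow_atTop_nhds_zero_of_norm_lt_one h2).mul_const (d 0)
    simp only [zero_mul] at this
    exact this.congr fun k => (hdpow k).symm
  have hu : Tendsto (fun k => (a k : ℂ)) atTop (nhds 0) :=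
    aux_contract t₁ h1 _ d (fun k => by simp only [hd]; ring) hdt
  have := (Complex.continuous_re.tendsto 0).comp hu
  simpa [Function.comp_def] using this

lemma aux_schur (b c : ℝ) (hc : |c| < 1) (h1 : b + c < 1) (h2 : c - b < 1)
    (a : ℕ → ℝ) (hrec : ∀ k, a (k + 2) = b * a (k + 1) + c * a k) :
    Tendsto a atTop (nhds 0) := by
  have hb2 : b < 2 := by cases abs_lt.mp hc; linarith
  have hbm2 : -2 < b := by cases abs_lt.mp hc; linarith
  rcases le_or_gt 0 (b ^ 2 + 4 * c) with hD | hD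
  · -- real roots
    set s := Real.sqrt (b ^ 2 + 4 * c) with hs
    have hs0 : 0 ≤ s := Real.sqrt_nonneg _
    have hs2 : s ^ 2 = b ^ 2 + 4 * c := Real.sq_sqrt hD
    have hub : s < 2 - b := by
      rw [hs, Real.sqrt_lt' (by linarith)]; nlinarith
    have hlb : s < b + 2 := by
      rw [hs, Real.sqrt_lt' (by linarith)]; nlinarith
    refine aux_rec2 (((b + s) / 2 : ℝ) : ℂ) (((b - s) / 2 : ℝ) : ℂ) b c ?_ ?_ ?_ ?_ a hrec
    · push_cast; ring
    · push_cast
      have : ((b : ℂ) + s) / 2 * (((b : ℂ) - s) / 2) = ((b^2 : ℝ) - (s^2 : ℝ)) / 4 := by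
        push_cast; ring
      rw [this, hs2]; push_cast; ring
    · rw [Complex.norm_real, Real.norm_eq_abs, abs_lt]
      constructor <;> [linarith; linarith]
    · rw [Complex.norm_real, Real.norm_eq_abs, abs_lt]
      constructor <;> [linarith; linarith]
  · -- complex roots
    set s := Real.sqrt (-(b ^ 2 + 4 * c)) with hs
    have hs0 : 0 ≤ s := Real.sqrt_nonneg _
    have hs2 : s ^ 2 = -(b ^ 2 + 4 * c) := Real.sq_sqrt (by linarith)
    have hcneg : 0 < -c := by nlinarith
    set t₁ : ℂ := Complex.mk (b / 2) (s / 2) with ht₁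
    set t₂ : ℂ := Complex.mk (b / 2) (-(s / 2)) with ht₂
    have hnormsq : Complex.normSq t₁ = -c := by
      simp [Complex.normSq_mk, ht₁]; nlinarith
    have hnormsq2 : Complex.normSq t₂ = -c := by
      simp [Complex.normSq_mk, ht₂]; nlinarith
    have hn1 : ‖t₁‖ < 1 := by
      have h := Complex.sq_norm t₁
      rw [hnormsq] at h
      have : ‖t₁‖ ^ 2 = -c := h
      nlinarith [norm_nonneg t₁, abs_lt.mp hc]
    have hn2 : ‖t₂‖ < 1 := by
      have h := Complex.sq_norm t₂
      rw [hnormsq2] at h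
      have : ‖t₂‖ ^ 2 = -c := h
      nlinarith [norm_nonneg t₂, abs_lt.mp hc]
    refine aux_rec2 t₁ t₂ b c ?_ ?_ hn1 hn2 a hrec
    · apply Complex.ext <;> simp [ht₁, ht₂] <;> ring
    · apply Complex.ext <;> simp [ht₁, ht₂, Complex.mul_re, Complex.mul_im] <;> nlinarith

lemma aux_perron (n : ℕ) (hn : 2 ≤ n) (A : Matrix (Fin n) (Fin n) ℝ)
    (hnonneg : ∀ i j, 0 ≤ A i j)
    (hrow : ∀ i, ∑ j, A i j = 1)
    (hirr : ∀ i j, 0 < (∑ k ∈ Finset.range n, A ^ k) i j)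
    (v : Fin n → ℝ) (hv : A.mulVec v = v) : ∀ i j, v i = v j := by
  have hne : (Finset.univ : Finset (Fin n)).Nonempty := by
    have : 0 < n := by omega
    exact ⟨⟨0, this⟩, Finset.mem_univ _⟩
  obtain ⟨i₀, -, hi₀⟩ := Finset.exists_max_image Finset.univ v hne
  set u : Fin n → ℝ := fun j => v i₀ - v j with hu
  have hu0 : ∀ j, 0 ≤ u j := fun j => sub_nonneg.mpr (hi₀ j (Finset.mem_univ j))
  have huA : A.mulVec u = u := by
    funext j
    simp only [mulVec, dotProduct, hu]
    have : ∑ k, A j k * (v i₀ - v k) = v i₀ * (∑ k, A j k) - ∑ k, A j k * v k := by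
      rw [Finset.mul_sum, ← Finset.sum_sub_distrib]; congr 1; ext k; ring
    rw [this, hrow j]
    have : ∑ k, A j k * v k = (A.mulVec v) j := rfl
    rw [this, hv]; ring
  have hpow : ∀ k : ℕ, (A ^ k).mulVec u = u := by
    intro k
    induction k with
    | zero => simp
    | succ k ih => rw [pow_succ', ← Matrix.mulVec_mulVec, ih, huA]
  have hSu : (∑ k ∈ Finset.range n, A ^ k).mulVec u = (n : ℝ) • u := by
    funext j
    have hsw : ((∑ k ∈ Finset.range n, A ^ k) *ᵥ u) j
        = ∑ k ∈ Finset.range n, ((A ^ k) *ᵥ u) j := by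
      simp only [mulVec, dotProduct, Matrix.sum_apply, Finset.sum_mul]
      rw [Finset.sum_comm]
    rw [hsw]
    simp [hpow, mul_comm]
  have hz : ∀ j, u j = 0 := by
    have hi₀u : u i₀ = 0 := by simp [hu]
    have h0 : ∑ j, (∑ k ∈ Finset.range n, A ^ k) i₀ j * u j = 0 := by
      have : ((∑ k ∈ Finset.range n, A ^ k).mulVec u) i₀ = 0 := by
        rw [hSu]; simp [hi₀u]
      simpa [mulVec, dotProduct] using this
    intro j
    have := (Finset.sum_eq_zero_iff_of_nonneg (fun j _ =>
      mul_nonneg (le_of_lt (hirr i₀ j)) (hu0 j))).mp h0 j (Finset.mem_univ j)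
    rcases mul_eq_zero.mp this with h | h
    · exact absurd h (ne_of_gt (hirr i₀ j))
    · exact h
  intro i j
  have hi := hz i
  have hj := hz j
  simp only [hu] at hi hj
  linarith

lemma aux_eigbound (n : ℕ) (A : Matrix (Fin n) (Fin n) ℝ)
    (hnonneg : ∀ i j, 0 ≤ A i j)
    (hrow : ∀ i, ∑ j, A i j = 1)
    (μ : ℝ) (v : Fin n → ℝ) (hv : A.mulVec v = μ • v) (hv0 : v ≠ 0) : |μ| ≤ 1 := by
  have hne : (Finset.univ : Finset (Fin n)).Nonempty := by
    obtain ⟨j, hj⟩ := Function.ne_iff.mp hv0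
    exact ⟨j, Finset.mem_univ _⟩
  obtain ⟨i₀, -, hi₀⟩ := Finset.exists_max_image Finset.univ (fun j => |v j|) hne
  have hpos : 0 < |v i₀| := by
    obtain ⟨j, hj⟩ := Function.ne_iff.mp hv0
    exact lt_of_lt_of_le (abs_pos.mpr hj) (hi₀ j (Finset.mem_univ j))
  have hb : |μ| * |v i₀| ≤ |v i₀| := by
    have h1 : |μ * v i₀| = |(A.mulVec v) i₀| := by rw [hv]; rfl
    calc |μ| * |v i₀| = |μ * v i₀| := (abs_mul _ _).symm
      _ = |∑ j, A i₀ j * v j| := by rw [h1]; rfl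
      _ ≤ ∑ j, |A i₀ j * v j| := Finset.abs_sum_le_sum_abs _ _
      _ = ∑ j, A i₀ j * |v j| := by
          congr 1; ext j; rw [abs_mul, abs_of_nonneg (hnonneg i₀ j)]
      _ ≤ ∑ j, A i₀ j * |v i₀| := by
          apply Finset.sum_le_sum
          intro j _
          exact mul_le_mul_of_nonneg_left (hi₀ j (Finset.mem_univ j)) (hnonneg i₀ j)
      _ = |v i₀| := by rw [← Finset.sum_mul, hrow, one_mul]
  exact le_of_mul_le_mul_right (by linarith) hpos

def auxP (b c : ℝ) : ℕ → ℝ × ℝ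
  | 0 => (1, 1)
  | k + 1 => (b * (auxP b c k).1 + c * (auxP b c k).2, (auxP b c k).1)

lemma auxP_one (b c : ℝ) (h : b + c = 1) : ∀ k, auxP b c k = (1, 1) := by
  intro k
  induction k with
  | zero => rfl
  | succ k ih => simp [auxP, ih]; linarith

lemma auxP_fst_rec (b c : ℝ) (k : ℕ) :
    (auxP b c (k + 2)).1 = b * (auxP b c (k + 1)).1 + c * (auxP b c k).1 := by
  show b * (auxP b c (k+1)).1 + c * (auxP b c (k+1)).2 = _
  rfl

lemma auxP_tendsto (b c : ℝ) (hc : |c| < 1) (h1 : b + c < 1) (h2 : c - b < 1) :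
    Tendsto (fun k => (auxP b c k).1) atTop (nhds 0) ∧
      Tendsto (fun k => (auxP b c k).2) atTop (nhds 0) := by
  have ha : Tendsto (fun k => (auxP b c k).1) atTop (nhds 0) :=
    aux_schur b c hc h1 h2 _ (auxP_fst_rec b c)
  refine ⟨ha, ?_⟩
  have hshift : ∀ k, (auxP b c (k + 1)).2 = (auxP b c k).1 := fun k => rfl
  rw [← Filter.tendsto_add_atTop_iff_nat 1]
  simpa only [hshift] using ha
theorem stmt_12 (n : ℕ) (hn : 2 ≤ n) (A : Matrix (Fin n) (Fin n) ℝ)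
    (hnonneg : ∀ i j, 0 ≤ A i j)
    (hrow : ∀ i, ∑ j, A i j = 1)
    (hsym : A.IsSymm)
    (hirr : ∀ i j, 0 < (∑ k ∈ Finset.range n, A ^ k) i j)
    (lamn : ℝ)
    (hlamn : Module.End.HasEigenvalue (Matrix.toLin' A) lamn)
    (hmin : ∀ μ : ℝ, Module.End.HasEigenvalue (Matrix.toLin' A) μ → lamn ≤ μ)
    (γ : ℝ) (hγ : 0 < γ) (hγ' : γ < 2) (hcrit : 2 * γ * lamn - lamn + 1 > 0)
    (Ahat : Matrix (Fin n ⊕ Fin n) (Fin n ⊕ Fin n) ℝ)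
    (hAhat : Ahat = Matrix.fromBlocks (γ • A) ((1 - γ) • A) 1 0)
    (w₁ : Fin n → ℝ) (hw : Matrix.vecMul w₁ A = w₁) (hw1 : ∑ i, w₁ i = 1)
    (x₀ : Fin n → ℝ) :
    Tendsto (fun k => (Ahat ^ k).mulVec (Sum.elim x₀ x₀)) atTop
      (nhds (fun _ => ∑ i, w₁ i * x₀ i)) := by
  classical
  have hnpos : (0:ℝ) < n := by
    have : (0:ℕ) < n := by omega
    exact_mod_cast this
  have hAsymm : ∀ i j, A i j = A j i := by
    intro i j
    conv_lhs => rw [← hsym]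
    rfl
  have hcol : ∀ j, ∑ i, A i j = 1 := by
    intro j
    rw [show (∑ i, A i j) = ∑ i, A j i from Finset.sum_congr rfl fun i _ => hAsymm i j]
    exact hrow j
  -- Hermitian structure and eigenbasis
  have hA : A.IsHermitian := by
    rw [Matrix.IsHermitian, Matrix.conjTranspose]
    exact hsym
  set μ : Fin n → ℝ := hA.eigenvalues with hμdef
  set V : Fin n → (Fin n → ℝ) := fun i => (WithLp.equiv 2 (Fin n → ℝ)) (hA.eigenvectorBasis i) with hVdef
  have hmul : ∀ i, A *ᵥ V i = μ i • V i := fun i => hA.mulVec_eigenvectorBasis i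
  have hVne : ∀ i, V i ≠ 0 := by
    intro i h
    exact hA.eigenvectorBasis.orthonormal.ne_zero i ((WithLp.ofLp_eq_zero 2).mp h)
  have hμ_ge : ∀ i, lamn ≤ μ i := by
    intro i
    refine hmin _ (Module.End.hasEigenvalue_of_hasEigenvector (x := V i) ⟨?_, hVne i⟩)
    rw [Module.End.mem_eigenspace_iff, Matrix.toLin'_apply]
    exact hmul i
  have hμ_abs : ∀ i, |μ i| ≤ 1 := fun i =>
    aux_eigbound n A hnonneg hrow (μ i) (V i) (hmul i) (hVne i)
  -- Perron
  have hconst : ∀ v : Fin n → ℝ, A.mulVec v = v → ∀ i j, v i = v j :=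
    aux_perron n hn A hnonneg hrow hirr
  -- w₁ is constant 1/n
  have hw' : A *ᵥ w₁ = w₁ := by
    rw [show A = Aᵀ from hsym.symm, Matrix.mulVec_transpose]
    exact hw
  have hw₁ : ∀ j, w₁ j = 1 / n := by
    intro j
    have hall := hconst w₁ hw'
    have : ∑ i, w₁ i = n * w₁ j := by
      rw [Finset.sum_congr rfl fun i _ => hall i j]
      simp [Finset.sum_const, mul_comm]
    rw [hw1] at this
    field_simp
    linarith
  have htarget : ∑ i, w₁ i * x₀ i = (∑ j, x₀ j) / n := by
    rw [Finset.sum_congr rfl fun i _ => by rw [hw₁ i]]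
    rw [← Finset.mul_sum]
    ring
  -- decomposition of any vector in the eigenbasis
  have hx : ∀ (x : Fin n → ℝ) (j : Fin n),
      x j = ∑ i, (∑ j', V i j' * x j') * V i j := by
    intro x j
    have h := hA.eigenvectorBasis.sum_repr (WithLp.toLp 2 x)
    have h2 : ∀ i, hA.eigenvectorBasis.repr (WithLp.toLp 2 x) i
        = ∑ j', V i j' * x j' := by
      intro i
      rw [hA.eigenvectorBasis.repr_apply_apply]
      rw [PiLp.inner_apply]
      simp [RCLike.inner_apply, hVdef, mul_comm]
    have h3 : (∑ i, hA.eigenvectorBasis.repr (WithLp.toLp 2 x) i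
        • hA.eigenvectorBasis i : EuclideanSpace ℝ (Fin n)) j = x j := congrArg (fun v => v j) h
    rw [WithLp.ofLp_sum, Finset.sum_apply] at h3
    rw [← h3]
    exact Finset.sum_congr rfl fun i _ => by rw [h2 i]; rfl
  -- column sums imply: non-1 eigenvectors sum to zero
  have hVsum : ∀ i, μ i ≠ 1 → ∑ j, V i j = 0 := by
    intro i hi
    have h1 : μ i * ∑ j, V i j = ∑ j, V i j := by
      calc μ i * ∑ j, V i j = ∑ j, (μ i • V i) j := by
            simp [Finset.mul_sum]
        _ = ∑ j, (A *ᵥ V i) j := by rw [hmul i]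
        _ = ∑ j, ∑ k, A j k * V i k := rfl
        _ = ∑ k, (∑ j, A j k) * V i k := by
            rw [Finset.sum_comm]
            exact Finset.sum_congr rfl fun k _ => by rw [Finset.sum_mul]
        _ = ∑ k, V i k := by
            exact Finset.sum_congr rfl fun k _ => by rw [hcol k, one_mul]
    by_contra h
    exact hi (mul_right_cancel₀ h (by rw [one_mul]; exact h1))
  -- eigenvectors with eigenvalue 1 are constant
  have hVconst : ∀ i, μ i = 1 → ∀ j j', V i j = V i j' := by
    intro i hi
    exact hconst (V i) (by rw [hmul i, hi, one_smul])
  -- the coefficient of x₀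
  set c : Fin n → ℝ := fun i => ∑ j', V i j' * x₀ j' with hcdef
  -- key identity at an arbitrary coordinate j
  have hkey : ∀ j : Fin n,
      ∑ i, (if μ i = 1 then c i * V i j else 0) = ∑ i, w₁ i * x₀ i := by
    intro j
    have hone : (1:ℝ) = ∑ i, (if μ i = 1 then (n : ℝ) * (V i j * V i j) else 0) := by
      have h1 := hx (fun _ => (1:ℝ)) j
      simp only [mul_one] at h1
      calc (1:ℝ) = ∑ i, (∑ j', V i j') * V i j := h1
        _ = ∑ i, (if μ i = 1 then (n : ℝ) * (V i j * V i j) else 0) := by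
            refine Finset.sum_congr rfl fun i _ => ?_
            by_cases hi : μ i = 1
            · rw [if_pos hi]
              rw [show (∑ j', V i j') = (n:ℝ) * V i j from by
                rw [Finset.sum_congr rfl fun j' _ => hVconst i hi j' j]
                simp [mul_comm]]
              ring
            · rw [if_neg hi, hVsum i hi, zero_mul]
    have h2 : ∑ i, (if μ i = 1 then c i * V i j else 0)
        = ∑ i, (if μ i = 1 then (V i j * V i j) * (∑ j', x₀ j') else 0) := by
      refine Finset.sum_congr rfl fun i _ => ?_
      by_cases hi : μ i = 1
      · rw [if_pos hi, if_pos hi, hcdef]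
        simp only
        rw [show (∑ j', V i j' * x₀ j') = V i j * ∑ j', x₀ j' from by
          rw [Finset.mul_sum]
          exact Finset.sum_congr rfl fun j' _ => by rw [hVconst i hi j' j]]
        ring
      · rw [if_neg hi, if_neg hi]
    rw [h2, htarget]
    have h3 : ∑ i, (if μ i = 1 then (V i j * V i j) * (∑ j', x₀ j') else 0)
        = (∑ i, (if μ i = 1 then V i j * V i j else 0)) * (∑ j', x₀ j') := by
      rw [Finset.sum_mul]
      refine Finset.sum_congr rfl fun i _ => ?_
      by_cases hi : μ i = 1 <;> simp [hi]
    rw [h3]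
    have h4 : (∑ i, (if μ i = 1 then V i j * V i j else 0)) = 1 / n := by
      have h5 : (n:ℝ) * ∑ i, (if μ i = 1 then V i j * V i j else 0) = 1 := by
        calc (n:ℝ) * ∑ i, (if μ i = 1 then V i j * V i j else 0)
            = ∑ i, (if μ i = 1 then (n:ℝ) * (V i j * V i j) else 0) := by
              rw [Finset.mul_sum]
              refine Finset.sum_congr rfl fun i _ => ?_
              by_cases hi : μ i = 1 <;> simp [hi]
          _ = 1 := hone.symm
      rw [eq_div_iff hnpos.ne']
      linarith
    rw [h4]
    ring
  -- the per-eigenvector evolution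
  have hstep : ∀ (i : Fin n) (α β : ℝ),
      Ahat *ᵥ (Sum.elim (α • V i) (β • V i))
        = Sum.elim ((γ * μ i * α + (1 - γ) * μ i * β) • V i) (α • V i) := by
    intro i α β
    rw [hAhat, Matrix.fromBlocks_mulVec]
    funext q
    cases q with
    | inl j =>
      simp only [Sum.elim_comp_inl, Sum.elim_comp_inr, Sum.elim_inl, Pi.add_apply,
        Matrix.smul_mulVec, Matrix.mulVec_smul, hmul i, Pi.smul_apply, smul_eq_mul]
      ring
    | inr j =>
      simp only [Sum.elim_comp_inl, Sum.elim_comp_inr, Sum.elim_inr, Pi.add_apply,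
        Matrix.one_mulVec, Matrix.zero_mulVec, Pi.zero_apply, Pi.smul_apply, smul_eq_mul,
        add_zero]
  have hfact : ∀ (i : Fin n) (k : ℕ),
      (Ahat ^ k) *ᵥ (Sum.elim (V i) (V i))
        = Sum.elim ((auxP (γ * μ i) ((1 - γ) * μ i) k).1 • V i)
            ((auxP (γ * μ i) ((1 - γ) * μ i) k).2 • V i) := by
    intro i k
    induction k with
    | zero =>
      rw [pow_zero, Matrix.one_mulVec]
      funext q
      cases q <;> simp [auxP]
    | succ k ih =>
      rw [pow_succ', ← Matrix.mulVec_mulVec, ih, hstep]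
      rfl
  -- scalar sequences tendsto
  have hseq1 : ∀ i, μ i ≠ 1 →
      Tendsto (fun k => (auxP (γ * μ i) ((1 - γ) * μ i) k).1) atTop (nhds 0) ∧
      Tendsto (fun k => (auxP (γ * μ i) ((1 - γ) * μ i) k).2) atTop (nhds 0) := by
    intro i hi
    have habs := hμ_abs i
    have hge := hμ_ge i
    have h1 : |μ i| ≤ 1 := habs
    have hle1 : μ i ≤ 1 := (abs_le.mp habs).2
    have hgem1 : -1 ≤ μ i := (abs_le.mp habs).1
    refine auxP_tendsto _ _ ?_ ?_ ?_
    · rw [abs_mul]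
      calc |1 - γ| * |μ i| ≤ |1 - γ| * 1 := by
            exact mul_le_mul_of_nonneg_left habs (abs_nonneg _)
        _ = |1 - γ| := mul_one _
        _ < 1 := abs_lt.mpr ⟨by linarith, by linarith⟩
    · have : γ * μ i + (1 - γ) * μ i = μ i := by ring
      rw [this]
      exact lt_of_le_of_ne hle1 hi
    · have heq : (1 - γ) * μ i - γ * μ i = (1 - 2 * γ) * μ i := by ring
      rw [heq]
      rcases le_or_gt (1 - 2 * γ) 0 with h | h
      · have h6 := mul_le_mul_of_nonpos_left hge h
        nlinarith
      · have h7 := mul_le_mul_of_nonneg_left hle1 (le_of_lt h)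
        nlinarith
  -- constant when eigenvalue is one
  have hseqone : ∀ i, μ i = 1 → ∀ k,
      auxP (γ * μ i) ((1 - γ) * μ i) k = (1, 1) := by
    intro i hi
    exact auxP_one _ _ (by rw [hi]; ring)
  -- linearity: expand the iterate
  have hsplit : Sum.elim x₀ x₀ = ∑ i, c i • (Sum.elim (V i) (V i)) := by
    funext q
    cases q with
    | inl j =>
      rw [Sum.elim_inl, hx x₀ j, Finset.sum_apply]
      rfl
    | inr j =>
      rw [Sum.elim_inr, hx x₀ j, Finset.sum_apply]
      rfl
  have hmvsum : ∀ (M : Matrix (Fin n ⊕ Fin n) (Fin n ⊕ Fin n) ℝ)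
      (f : Fin n → (Fin n ⊕ Fin n) → ℝ),
      M *ᵥ (∑ i, f i) = ∑ i, M *ᵥ (f i) := by
    intro M f
    funext q
    simp only [Matrix.mulVec, dotProduct, Finset.sum_apply, Finset.mul_sum]
    rw [Finset.sum_comm]
  have hexpand : ∀ k, (Ahat ^ k) *ᵥ (Sum.elim x₀ x₀)
      = ∑ i, c i • Sum.elim ((auxP (γ * μ i) ((1 - γ) * μ i) k).1 • V i)
          ((auxP (γ * μ i) ((1 - γ) * μ i) k).2 • V i) := by
    intro k
    rw [hsplit, hmvsum]
    refine Finset.sum_congr rfl fun i _ => ?_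
    rw [Matrix.mulVec_smul, hfact i k]
  -- now prove convergence coordinatewise
  rw [tendsto_pi_nhds]
  intro q
  have hmain : ∀ (j : Fin n) (s : Fin n → ℕ → ℝ),
      (∀ i, μ i = 1 → ∀ k, s i k = 1) →
      (∀ i, μ i ≠ 1 → Tendsto (s i) atTop (nhds 0)) →
      Tendsto (fun k => ∑ i, c i * (s i k * V i j)) atTop
        (nhds (∑ i, w₁ i * x₀ i)) := by
    intro j s hs1 hs0
    rw [← hkey j]
    refine tendsto_finset_sum _ fun i _ => ?_
    by_cases hi : μ i = 1
    · rw [if_pos hi]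
      refine Tendsto.congr (fun k => ?_) tendsto_const_nhds
      rw [hs1 i hi k, one_mul]
    · rw [if_neg hi]
      have := ((hs0 i hi).mul_const (V i j)).const_mul (c i)
      simpa using this
  cases q with
  | inl j =>
    have heval : ∀ k, ((Ahat ^ k) *ᵥ (Sum.elim x₀ x₀)) (Sum.inl j)
        = ∑ i, c i * ((auxP (γ * μ i) ((1 - γ) * μ i) k).1 * V i j) := by
      intro k
      rw [hexpand k]
      rw [Finset.sum_apply]
      rfl
    refine Tendsto.congr (fun k => (heval k).symm) ?_
    exact hmain j (fun i k => (auxP (γ * μ i) ((1 - γ) * μ i) k).1)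
      (fun i hi k => by simp only [hseqone i hi k])
      (fun i hi => (hseq1 i hi).1)
  | inr j =>
    have heval : ∀ k, ((Ahat ^ k) *ᵥ (Sum.elim x₀ x₀)) (Sum.inr j)
        = ∑ i, c i * ((auxP (γ * μ i) ((1 - γ) * μ i) k).2 * V i j) := by
      intro k
      rw [hexpand k]
      rw [Finset.sum_apply]
      rfl
    refine Tendsto.congr (fun k => (heval k).symm) ?_
    exact hmain j (fun i k => (auxP (γ * μ i) ((1 - γ) * μ i) k).2)
      (fun i hi k => by simp only [hseqone i hi k])
      (fun i hi => (hseq1 i hi).2)
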